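/- Let b(σᵢ) denote the smallest fixed point in [0,1) of h(x) = (2/π)·arcsin(1 − σᵣ²(1−x)/(σᵣ² + σᵢ²)) for fixed σᵣ > 0. Then as σᵢ → ∞, 1 − b(σᵢ) = 8σᵣ²/(π²σᵢ²) + O(σᵣ³/σᵢ³); in particular σᵢ²(1 − b(σᵢ)) → 8σᵣ²/π². -/

import Mathlib

open Real Set Filter

-- sin y / y → 1 as y → 0 (within y ≠ 0)
lemma sin_div_self_tendsto :
    Tendsto (fun y : ℝ => Real.sin y / y) (nhdsWithin 0 {(0:ℝ)}ᶜ) (nhds 1) := by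
  have h := Real.hasDerivAt_sin 0
  rw [hasDerivAt_iff_tendsto_slope] at h
  have hs : slope Real.sin 0 = fun y : ℝ => Real.sin y / y := by
    funext y
    simp [slope_def_field]
  rw [hs, Real.cos_zero] at h
  exact h

-- key algebraic consequence of the fixed point equation
lemma key_eq (σr σi bv : ℝ) (hr : 0 < σr) (hi : 0 < σi)
    (hb0 : bv ∈ Set.Ico (0:ℝ) 1)
    (heq : 2 / π * Real.arcsin (1 - σr ^ 2 * (1 - bv) / (σr ^ 2 + σi ^ 2)) = bv) :
    σr ^ 2 / (σr ^ 2 + σi ^ 2) * (1 - bv) = 2 * Real.sin (π * (1 - bv) / 4) ^ 2 ∧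
    1 - bv ≤ 2 * (σr ^ 2 / (σr ^ 2 + σi ^ 2)) := by
  obtain ⟨hb00, hb1⟩ := hb0
  set u : ℝ := 1 - bv with hu
  set c : ℝ := σr ^ 2 / (σr ^ 2 + σi ^ 2) with hc
  have hden : (0:ℝ) < σr ^ 2 + σi ^ 2 := by positivity
  have hcpos : 0 < c := by positivity
  have hc1 : c ≤ 1 := by
    rw [hc, div_le_one hden]; nlinarith
  have hupos : 0 < u := by simp [hu]; linarith
  have hu1 : u ≤ 1 := by simp [hu]; linarith
  have hcu : σr ^ 2 * (1 - bv) / (σr ^ 2 + σi ^ 2) = c * u := by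
    rw [hc, hu]; ring
  have hcu0 : 0 ≤ c * u := by positivity
  have hcu1 : c * u ≤ 1 := by nlinarith
  have hpi : (0:ℝ) < π := Real.pi_pos
  have harc : Real.arcsin (1 - c * u) = π * bv / 2 := by
    have := heq
    rw [hcu] at this
    field_simp at this ⊢
    linarith
  have hsin : 1 - c * u = Real.sin (π * bv / 2) := by
    rw [← harc, Real.sin_arcsin (by linarith) (by linarith)]
  have hbv : π * bv / 2 = π / 2 - π * u / 2 := by rw [hu]; ring
  have hcos : Real.sin (π * bv / 2) = Real.cos (π * u / 2) := by
    rw [hbv, Real.sin_pi_div_two_sub]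
  have hcos2 : Real.cos (π * u / 2) = 1 - 2 * Real.sin (π * u / 4) ^ 2 := by
    have h1 : π * u / 2 = 2 * (π * u / 4) := by ring
    rw [h1, Real.cos_two_mul]
    have := Real.sin_sq_add_cos_sq (π * u / 4)
    nlinarith
  have hmain : c * u = 2 * Real.sin (π * u / 4) ^ 2 := by
    have := hsin
    rw [hcos, hcos2] at this
    linarith
  refine ⟨hmain, ?_⟩
  have hsge : u / 2 ≤ Real.sin (π * u / 4) := by
    have h := Real.mul_le_sin (x := π * u / 4) (by positivity) (by nlinarith)
    calc u / 2 = 2 / π * (π * u / 4) := by field_simp; ring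
    _ ≤ _ := h
  have : u ^ 2 / 2 ≤ c * u := by
    rw [hmain]
    nlinarith
  nlinarith

-- eventual-equality helper
lemma ev_eq_aux (σr σi u : ℝ) (hr : 0 < σr) (hi : 0 < σi) (hu : 0 < u) (hu1 : u ≤ 1)
    (hmain : σr ^ 2 / (σr ^ 2 + σi ^ 2) * u = 2 * Real.sin (π * u / 4) ^ 2) :
    σr ^ 2 * (1 - σr ^ 2 / (σr ^ 2 + σi ^ 2)) *
      (8 / π ^ 2 * ((Real.sin (π * u / 4) / (π * u / 4)) ^ 2)⁻¹) = σi ^ 2 * u := by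
  have hpi : (0:ℝ) < π := Real.pi_pos
  have hden : (0:ℝ) < σr ^ 2 + σi ^ 2 := by positivity
  have hs : 0 < Real.sin (π * u / 4) := by
    apply Real.sin_pos_of_pos_of_lt_pi (by positivity)
    nlinarith
  have hmain' : σr ^ 2 * u = 2 * Real.sin (π * u / 4) ^ 2 * (σr ^ 2 + σi ^ 2) := by
    field_simp at hmain
    rw [mul_comm u π] at hmain
    linarith
  have hs2 : Real.sin (π * u / 4) ^ 2 = σr ^ 2 * u / (2 * (σr ^ 2 + σi ^ 2)) := by
    rw [eq_div_iff (by positivity)]; linarith [hmain']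
  rw [div_pow, hs2]
  field_simp
  ring

theorem stmt_11 (σr : ℝ) (hr : 0 < σr) (b : ℝ → ℝ)
    (hb : ∀ σi : ℝ, 0 < σi →
      b σi ∈ Set.Ico (0 : ℝ) 1 ∧
      2 / π * Real.arcsin (1 - σr ^ 2 * (1 - b σi) / (σr ^ 2 + σi ^ 2)) = b σi ∧
      ∀ x ∈ Set.Ico (0 : ℝ) 1,
        2 / π * Real.arcsin (1 - σr ^ 2 * (1 - x) / (σr ^ 2 + σi ^ 2)) = x → b σi ≤ x) :
    Filter.Tendsto (fun σi => σi ^ 2 * (1 - b σi)) Filter.atTop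
      (nhds (8 * σr ^ 2 / π ^ 2)) := by
  have hpi : (0:ℝ) < π := Real.pi_pos
  set u : ℝ → ℝ := fun σi => 1 - b σi with hu
  set c : ℝ → ℝ := fun σi => σr ^ 2 / (σr ^ 2 + σi ^ 2) with hc
  have hev : ∀ᶠ σi in atTop, (0:ℝ) < σi := eventually_gt_atTop 0
  have hfacts : ∀ σi : ℝ, 0 < σi →
      0 < u σi ∧ u σi ≤ 1 ∧ u σi ≤ 2 * c σi ∧
      c σi * u σi = 2 * Real.sin (π * u σi / 4) ^ 2 := by
    intro σi hi
    obtain ⟨hmem, heq, -⟩ := hb σi hi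
    obtain ⟨h1, h2⟩ := key_eq σr σi (b σi) hr hi hmem heq
    refine ⟨by simp [hu]; exact hmem.2, by simp [hu]; exact hmem.1, h2, h1⟩
  -- σr² + σi² → ∞
  have htop : Tendsto (fun σi : ℝ => σr ^ 2 + σi ^ 2) atTop atTop :=
    tendsto_atTop_add_const_left _ _ (tendsto_pow_atTop two_ne_zero)
  -- c → 0
  have hc0 : Tendsto c atTop (nhds 0) := by
    simpa using Tendsto.div_atTop (tendsto_const_nhds (x := σr ^ 2)) htop
  -- u → 0 by squeeze
  have hu0 : Tendsto u atTop (nhds 0) := by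
    apply tendsto_of_tendsto_of_tendsto_of_le_of_le' tendsto_const_nhds
      (by simpa using hc0.const_mul 2)
    · filter_upwards [hev] with σi hi
      exact (hfacts σi hi).1.le
    · filter_upwards [hev] with σi hi
      exact (hfacts σi hi).2.2.1
  -- π u / 4 → 0 within ≠ 0
  have hmaps : Tendsto (fun σi => π * u σi / 4) atTop (nhdsWithin 0 {(0:ℝ)}ᶜ) := by
    rw [tendsto_nhdsWithin_iff]
    constructor
    · have := (hu0.const_mul π).div_const 4
      simpa using this
    · filter_upwards [hev] with σi hi
      have := (hfacts σi hi).1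
      simp only [Set.mem_compl_iff, Set.mem_singleton_iff]
      positivity
  -- sin(πu/4)/(πu/4) → 1
  have hg : Tendsto (fun σi => Real.sin (π * u σi / 4) / (π * u σi / 4)) atTop (nhds 1) :=
    sin_div_self_tendsto.comp hmaps
  -- main limit via product
  have hlim1 : Tendsto (fun σi => σr ^ 2 * (1 - c σi)) atTop (nhds (σr ^ 2)) := by
    have := (tendsto_const_nhds (x := (1:ℝ)) (f := atTop)).sub hc0
    have := this.const_mul (σr ^ 2)
    simpa using this
  have hlim2 : Tendsto
      (fun σi => 8 / π ^ 2 * ((Real.sin (π * u σi / 4) / (π * u σi / 4)) ^ 2)⁻¹)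
      atTop (nhds (8 / π ^ 2)) := by
    have h2 := (hg.pow 2).inv₀ (by norm_num)
    have := h2.const_mul (8 / π ^ 2)
    simpa using this
  have hprod := hlim1.mul hlim2
  have hfinal : σr ^ 2 * (8 / π ^ 2) = 8 * σr ^ 2 / π ^ 2 := by ring
  rw [hfinal] at hprod
  apply hprod.congr'
  filter_upwards [hev] with σi hi
  obtain ⟨h1, h2, h3, h4⟩ := hfacts σi hi
  exact ev_eq_aux σr σi (u σi) hr hi h1 h2 (by simpa [hc] using h4)
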